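/- Let w ∈ S_n avoid 3412 and 4231 and suppose (i,j) satisfies: w fixes {1,...,i-1} setwise, w(i) ≥ j, and w(j) = i. Then every transposition T ≤ w (in Bruhat order) that does not fix i is of the form T_{i,r} with i < r ≤ j. -/

import Mathlib

open Equiv

/-- Number of inversions (Coxeter length) of a permutation of ℕ. -/
noncomputable def invNum (w : Perm ℕ) : ℕ :=
  Set.ncard {p : ℕ × ℕ | p.1 < p.2 ∧ w p.2 < w p.1}

/-- Strong Bruhat order on (finitary) permutations of ℕ. -/
def BruhatLE (x y : Perm ℕ) : Prop :=
  Relation.ReflTransGen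
    (fun u v => (∃ a b : ℕ, a < b ∧ v = u * Equiv.swap a b) ∧ invNum u < invNum v) x y

def BruhatLT (x y : Perm ℕ) : Prop := BruhatLE x y ∧ x ≠ y

/-- w avoids the pattern 3412. -/
def Avoids3412 (w : Perm ℕ) : Prop :=
  ¬ ∃ a b c d : ℕ, a < b ∧ b < c ∧ c < d ∧ w c < w d ∧ w d < w a ∧ w a < w b

/-- w avoids the pattern 4231. -/
def Avoids4231 (w : Perm ℕ) : Prop :=
  ¬ ∃ a b c d : ℕ, a < b ∧ b < c ∧ c < d ∧ w d < w b ∧ w b < w c ∧ w c < w a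

namespace Stmt17Aux

/-- The inversion set. -/
def Inv (u : Perm ℕ) : Set (ℕ × ℕ) := {p : ℕ × ℕ | p.1 < p.2 ∧ u p.2 < u p.1}

lemma invNum_eq (u : Perm ℕ) : invNum u = (Inv u).ncard := rfl

/-- Finitary permutation. -/
def Fty (u : Perm ℕ) : Prop := ∃ N, ∀ k, N ≤ k → u k = k

lemma fty_small {u : Perm ℕ} {N : ℕ} (hN : ∀ k, N ≤ k → u k = k) {p : ℕ} (hp : p < N) :
    u p < N := by
  by_contra h
  push_neg at h
  have h2 : u (u p) = u p := hN (u p) h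
  have h3 : u p = p := u.injective h2
  omega

lemma inv_finite {u : Perm ℕ} (hu : Fty u) : (Inv u).Finite := by
  obtain ⟨N, hN⟩ := hu
  apply Set.Finite.subset ((Set.finite_Iio N).prod (Set.finite_Iio N))
  rintro ⟨p, q⟩ ⟨hpq, hval⟩
  dsimp only at hpq hval
  simp only [Set.mem_prod, Set.mem_Iio]
  by_cases hq : q < N
  · exact ⟨by omega, hq⟩
  · push_neg at hq
    have huq : u q = q := hN q hq
    by_cases hp : p < N
    · have := fty_small hN hp
      omega
    · push_neg at hp
      have := hN p hp
      omega

lemma fty_mul_swap {u : Perm ℕ} (hu : Fty u) (a b : ℕ) : Fty (u * Equiv.swap a b) := by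
  obtain ⟨N, hN⟩ := hu
  refine ⟨max N (max a b + 1), fun k hk => ?_⟩
  have hka : k ≠ a := by omega
  have hkb : k ≠ b := by omega
  rw [Equiv.Perm.mul_apply, Equiv.swap_apply_of_ne_of_ne hka hkb]
  exact hN k (le_trans (le_max_left _ _) hk)

/-- Key lemma: right multiplication by a swap sorting an ascent increases inversions. -/
lemma invNum_lt_mul_swap {u : Perm ℕ} (hu : Fty u) {a b : ℕ} (hab : a < b)
    (hv : u a < u b) : invNum u < invNum (u * Equiv.swap a b) := by
  set v := u * Equiv.swap a b with hvdef
  have hva : v a = u b := by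
    rw [hvdef, Equiv.Perm.mul_apply, Equiv.swap_apply_left]
  have hvb : v b = u a := by
    rw [hvdef, Equiv.Perm.mul_apply, Equiv.swap_apply_right]
  have hvk : ∀ k, k ≠ a → k ≠ b → v k = u k := by
    intro k h1 h2
    rw [hvdef, Equiv.Perm.mul_apply, Equiv.swap_apply_of_ne_of_ne h1 h2]
  have hvfty : Fty v := fty_mul_swap hu a b
  -- the injection from Inv u into Inv v \ {(a,b)}
  set f : ℕ × ℕ → ℕ × ℕ := fun z =>
    if z.2 = a ∧ u z.1 < u b then (z.1, b)
    else if z.1 = b ∧ u a < u z.2 then (a, z.2) else z with hf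
  set g : ℕ × ℕ → ℕ × ℕ := fun z =>
    if z.2 = b ∧ u a < u z.1 ∧ u z.1 < u b then (z.1, a)
    else if z.1 = a ∧ u a < u z.2 ∧ u z.2 < u b then (b, z.2) else z with hg
  have hmaps : ∀ z ∈ Inv u, f z ∈ (Inv v) \ {(a, b)} := by
    rintro ⟨p, q⟩ ⟨hpq, hval⟩
    dsimp only at hpq hval
    by_cases h1 : q = a ∧ u p < u b
    · obtain ⟨hqa, hpb⟩ := h1
      have hpa : p ≠ a := by omega
      have hpbne : p ≠ b := by omega
      have hfz : f (p, q) = (p, b) := by simp [hf, hqa, hpb]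
      rw [hfz]
      refine ⟨⟨by omega, ?_⟩, ?_⟩
      · show v b < v p
        rw [hvb, hvk p hpa hpbne, ← hqa]
        exact hval
      · simp only [Set.mem_singleton_iff, Prod.mk.injEq, not_and]
        intro h; exact absurd h hpa
    · by_cases h2 : p = b ∧ u a < u q
      · obtain ⟨hpb, hq⟩ := h2
        have hqa : q ≠ a := by omega
        have hqb : q ≠ b := by omega
        have hfz : f (p, q) = (a, q) := by
          simp only [hf]
          rw [if_neg (by rintro ⟨h, _⟩; exact hqa h), if_pos ⟨hpb, hq⟩]
        rw [hfz]
        refine ⟨⟨by omega, ?_⟩, ?_⟩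
        · show v q < v a
          rw [hva, hvk q hqa hqb, ← hpb]
          exact hval
        · simp only [Set.mem_singleton_iff, Prod.mk.injEq, not_and]
          intro _; exact hqb
      · have hfz : f (p, q) = (p, q) := by
          simp only [hf]
          rw [if_neg h1, if_neg h2]
        rw [hfz]
        push_neg at h1 h2
        constructor
        · refine ⟨hpq, ?_⟩
          show v q < v p
          by_cases hqa : q = a
          · have hba : u b ≤ u p := h1 hqa
            have hpb : p ≠ b := by omega
            have hpa : p ≠ a := by omega
            rw [hqa, hva, hvk p hpa hpb]
            rcases lt_or_eq_of_le hba with h | h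
            · exact h
            · exact absurd (u.injective h) hpb.symm
          · by_cases hqb : q = b
            · have hpa : p ≠ a := by
                intro h
                rw [h] at hval; rw [hqb] at hval; omega
              have hpb : p ≠ b := by omega
              rw [hqb, hvb, hvk p hpa hpb]
              rw [hqb] at hval
              omega
            · rw [hvk q hqa hqb]
              by_cases hpa : p = a
              · rw [hpa, hva]
                rw [hpa] at hval
                omega
              · by_cases hpb : p = b
                · have hq : u q ≤ u a := h2 hpb
                  rw [hpb, hvb]
                  rcases lt_or_eq_of_le hq with h | h
                  · exact h
                  · exact absurd (u.injective h) hqa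
                · rw [hvk p hpa hpb]; exact hval
        · simp only [Set.mem_singleton_iff, Prod.mk.injEq, not_and]
          intro hpa hqb
          rw [hpa, hqb] at hval
          omega
  have hginv : ∀ z ∈ Inv u, g (f z) = z := by
    rintro ⟨p, q⟩ ⟨hpq, hval⟩
    dsimp only at hpq hval
    by_cases h1 : q = a ∧ u p < u b
    · obtain ⟨hqa, hpb⟩ := h1
      have hap : u a < u p := by rw [← hqa]; exact hval
      have hfz : f (p, q) = (p, b) := by simp [hf, hqa, hpb]
      rw [hfz]
      have hgz : g (p, b) = (p, a) := by simp [hg, hap, hpb]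
      rw [hgz, hqa]
    · by_cases h2 : p = b ∧ u a < u q
      · obtain ⟨hpb, hq⟩ := h2
        have hqa : q ≠ a := by omega
        have hqb : q ≠ b := by omega
        have hqub : u q < u b := by rw [← hpb]; exact hval
        have hfz : f (p, q) = (a, q) := by
          simp only [hf]
          rw [if_neg (by rintro ⟨h, _⟩; exact hqa h), if_pos ⟨hpb, hq⟩]
        rw [hfz]
        have hgz : g (a, q) = (b, q) := by
          simp [hg, hq, hqub, hqb]
        rw [hgz, hpb]
      · have hfz : f (p, q) = (p, q) := by
          simp only [hf]
          rw [if_neg h1, if_neg h2]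
        rw [hfz]
        push_neg at h1 h2
        simp only [hg]
        rw [if_neg, if_neg]
        · rintro ⟨hpa, hq1, hq2⟩
          rw [hpa] at hval
          omega
        · rintro ⟨hqb, hp1, hp2⟩
          rw [hqb] at hval
          omega
  have hinj : Set.InjOn f (Inv u) := by
    intro z hz z' hz' h
    rw [← hginv z hz, ← hginv z' hz', h]
  have hfin : (Inv v).Finite := inv_finite hvfty
  have h1 : (Inv u).ncard ≤ ((Inv v) \ {(a, b)}).ncard :=
    Set.ncard_le_ncard_of_injOn f hmaps hinj hfin.diff
  have hmem : (a, b) ∈ Inv v := by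
    refine ⟨hab, ?_⟩
    simp only [hva, hvb]
    exact hv
  have h2 : ((Inv v) \ {(a, b)}).ncard < (Inv v).ncard :=
    Set.ncard_diff_singleton_lt_of_mem hmem hfin
  rw [invNum_eq, invNum_eq]
  omega

/-- The rank function. -/
def Rk (u : Perm ℕ) (p q : ℕ) : ℕ := ((Finset.range p).filter (fun k => q ≤ u k)).card

lemma rk_le_mul_swap {u : Perm ℕ} {a b : ℕ} (hab : a < b) (huab : u a < u b) (p q : ℕ) :
    Rk u p q ≤ Rk (u * Equiv.swap a b) p q := by
  set v := u * Equiv.swap a b with hvdef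
  have hva : v a = u b := by
    rw [hvdef, Equiv.Perm.mul_apply, Equiv.swap_apply_left]
  have hvk : ∀ k, k ≠ a → k ≠ b → v k = u k := by
    intro k h1 h2
    rw [hvdef, Equiv.Perm.mul_apply, Equiv.swap_apply_of_ne_of_ne h1 h2]
  by_cases hp : p ≤ b
  · apply Finset.card_le_card
    intro k hk
    simp only [Finset.mem_filter, Finset.mem_range] at hk ⊢
    obtain ⟨hk1, hk2⟩ := hk
    refine ⟨hk1, ?_⟩
    by_cases hka : k = a
    · subst hka; rw [hva]; omega
    · rw [hvk k hka (by omega)]; exact hk2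
  · push_neg at hp
    apply Finset.card_le_card_of_injOn (fun k => Equiv.swap a b k)
    · intro k hk
      simp only [Finset.mem_coe, Finset.mem_filter, Finset.mem_range] at hk ⊢
      obtain ⟨hk1, hk2⟩ := hk
      constructor
      · by_cases hka : k = a
        · subst hka; rw [Equiv.swap_apply_left]; omega
        · by_cases hkb : k = b
          · subst hkb; rw [Equiv.swap_apply_right]; omega
          · rw [Equiv.swap_apply_of_ne_of_ne hka hkb]; omega
      · have : v (Equiv.swap a b k) = u k := by
          rw [hvdef, Equiv.Perm.mul_apply, Equiv.swap_apply_self]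
        rw [this]; exact hk2
    · exact (Equiv.injective _).injOn
  
lemma chain_mono {u v : Perm ℕ}
    (h : Relation.ReflTransGen
      (fun u v => (∃ a b : ℕ, a < b ∧ v = u * Equiv.swap a b) ∧ invNum u < invNum v) u v)
    (hu : Fty u) : Fty v ∧ ∀ p q, Rk u p q ≤ Rk v p q := by
  induction h with
  | refl => exact ⟨hu, fun p q => le_rfl⟩
  | tail hchain hstep ih =>
    obtain ⟨hm, hRm⟩ := ih
    obtain ⟨⟨a, b, hab, hveq⟩, hlen⟩ := hstep
    rename_i m v'
    have hvfty : Fty v' := hveq ▸ fty_mul_swap hm a b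
    have hma : m a < m b := by
      rcases lt_trichotomy (m a) (m b) with h | h | h
      · exact h
      · exact absurd (m.injective h) (by omega)
      · exfalso
        have hback : m = v' * Equiv.swap a b := by
          rw [hveq, mul_assoc, Equiv.swap_mul_self, mul_one]
        have hva : v' a = m b := by
          rw [hveq, Equiv.Perm.mul_apply, Equiv.swap_apply_left]
        have hvb : v' b = m a := by
          rw [hveq, Equiv.Perm.mul_apply, Equiv.swap_apply_right]
        have := invNum_lt_mul_swap hvfty hab (by rw [hva, hvb]; exact h)
        rw [← hback] at this
        omega
    refine ⟨hvfty, fun p q => ?_⟩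
    calc Rk u p q ≤ Rk m p q := hRm p q
      _ ≤ Rk v' p q := by rw [hveq]; exact rk_le_mul_swap hab hma p q

end Stmt17Aux

open Stmt17Aux in
/-- With wedge data (i,j), every transposition below w in Bruhat order that
does not fix i has the form T_{i,r} with i < r ≤ j. -/
theorem stmt17 (n : ℕ) (w : Perm ℕ) (hw : ∀ k, n ≤ k → w k = k)
    (h3412 : Avoids3412 w) (h4231 : Avoids4231 w)
    (i j : ℕ) (hij : i < j) (hjn : j < n)
    (hfix : (fun m => w m) '' {m | m < i} = {m | m < i})
    (hwi : j ≤ w i) (hwj : w j = i) :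
    ∀ x y : ℕ, x < y → BruhatLE (Equiv.swap x y) w →
      Equiv.swap x y i ≠ i → x = i ∧ y ≤ j := by
  intro x y hxy hBru hTi
  have hTfty : Fty (Equiv.swap x y) := by
    refine ⟨y + 1, fun k hk => ?_⟩
    exact Equiv.swap_apply_of_ne_of_ne (by omega) (by omega)
  obtain ⟨-, hR⟩ := chain_mono hBru hTfty
  have hsmall : ∀ m, m < i → w m < i := by
    intro m hm
    have : w m ∈ {m | m < i} := by
      rw [← hfix]
      exact ⟨m, hm, rfl⟩
    exact this
  have hix : i = x ∨ i = y := by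
    by_contra h
    push_neg at h
    exact hTi (Equiv.swap_apply_of_ne_of_ne h.1 h.2)
  rcases hix with hix | hiy
  · -- i = x : show y ≤ j
    subst hix
    refine ⟨rfl, ?_⟩
    by_contra hyj
    push_neg at hyj   -- j < y
    have h1 : y - i ≤ Rk (Equiv.swap i y) y (i + 1) := by
      have hsub : Finset.Ico i y ⊆
          (Finset.range y).filter (fun k => i + 1 ≤ (Equiv.swap i y) k) := by
        intro k hk
        simp only [Finset.mem_Ico] at hk
        simp only [Finset.mem_filter, Finset.mem_range]
        refine ⟨hk.2, ?_⟩
        by_cases hki : k = i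
        · subst hki; rw [Equiv.swap_apply_left]; omega
        · rw [Equiv.swap_apply_of_ne_of_ne hki (by omega)]; omega
      have := Finset.card_le_card hsub
      rwa [Nat.card_Ico] at this
    have h2 : Rk w y (i + 1) + (i + 1) ≤ y := by
      have hsub : insert j (Finset.range i) ⊆
          (Finset.range y).filter (fun k => ¬ (i + 1 ≤ w k)) := by
        intro k hk
        simp only [Finset.mem_insert, Finset.mem_range] at hk
        simp only [Finset.mem_filter, Finset.mem_range]
        rcases hk with hk | hk
        · subst hk
          refine ⟨by omega, by omega⟩
        · have := hsmall k hk
          refine ⟨by omega, by omega⟩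
      have hcard : (insert j (Finset.range i)).card = i + 1 := by
        rw [Finset.card_insert_of_notMem (by simp; omega), Finset.card_range]
      have hle := Finset.card_le_card hsub
      rw [hcard] at hle
      have htot := Finset.card_filter_add_card_filter_not
        (s := Finset.range y) (p := fun k => i + 1 ≤ w k)
      rw [Finset.card_range] at htot
      unfold Rk
      omega
    have := hR y (i + 1)
    omega
  · -- i = y : impossible
    exfalso
    subst hiy
    have h1 : 1 ≤ Rk (Equiv.swap x i) (x + 1) i := by
      apply Finset.card_pos.mpr
      refine ⟨x, ?_⟩
      simp only [Finset.mem_filter, Finset.mem_range]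
      refine ⟨by omega, ?_⟩
      rw [Equiv.swap_apply_left]
    have h2 : Rk w (x + 1) i = 0 := by
      apply Finset.card_eq_zero.mpr
      apply Finset.filter_eq_empty_iff.mpr
      intro k hk
      simp only [Finset.mem_range] at hk
      have := hsmall k (by omega)
      omega
    have := hR (x + 1) i
    omega
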